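/- Let G be an abelian group with a symmetric generating set S containing an element g_0 of order at least 3. Then every φ ∈ ξ_{S^{≤2}} is either the identity or the inversion map g ↦ g^{-1}; hence Ξ_{S^{≤2}} = G ⋊ {id, η}. -/
import Mathlib


open Pointwise

private lemma xi_key {G : Type*} [CommGroup G] (S : Set G)
    (hSsymm : ∀ s ∈ S, s⁻¹ ∈ S) (hSgen : Subgroup.closure S = ⊤)
    (g0 : G) (hg0S : g0 ∈ S) (hg0' : g0 ^ 2 ≠ 1)
    (φ : Equiv.Perm G) (h1 : φ 1 = 1)
    (hstep : ∀ g : G, ∀ u ∈ S ∪ S * S, φ (g * u) = φ g * u ∨ φ (g * u) = φ g * u⁻¹)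
    (hfix : φ g0 = g0) : ∀ g : G, φ g = g := by
  have key : ∀ g : G, φ g = g ∧ φ (g * g0) = g * g0 := by
    have step : ∀ g : G, φ g = g ∧ φ (g * g0) = g * g0 → ∀ s ∈ S,
        φ (g * s) = g * s ∧ φ (g * s * g0) = g * s * g0 := by
      rintro g ⟨hg, hgg0⟩ s hs
      have hsS : s ∈ S ∪ S * S := Set.mem_union_left _ hs
      have hg0invs : g0⁻¹ * s ∈ S ∪ S * S :=
        Set.mem_union_right _ (Set.mul_mem_mul (hSsymm g0 hg0S) hs)
      have hsg0 : s * g0 ∈ S ∪ S * S :=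
        Set.mem_union_right _ (Set.mul_mem_mul hs hg0S)
      constructor
      · have h1 := hstep g s hsS
        have h2 := hstep (g * g0) (g0⁻¹ * s) hg0invs
        rw [show g * g0 * (g0⁻¹ * s) = g * s by group] at h2
        rw [hg] at h1
        rw [hgg0] at h2
        rcases h1 with h1 | h1
        · exact h1
        · rcases h2 with h2 | h2
          · rw [show g * g0 * (g0⁻¹ * s) = g * s by group] at h2
            exact h2
          · exfalso
            rw [h1, mul_assoc] at h2
            have e1 : s⁻¹ = g0 * (g0⁻¹ * s)⁻¹ := mul_left_cancel h2
            rw [mul_inv, inv_inv, ← mul_assoc] at e1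
            apply hg0'
            rw [sq]
            exact mul_right_cancel (b := s⁻¹) (by rw [one_mul]; exact e1.symm)
      · have h1 := hstep g (s * g0) hsg0
        have h2 := hstep (g * g0) s hsS
        rw [show g * (s * g0) = g * s * g0 by group] at h1
        rw [show g * g0 * s = g * s * g0 by simp [mul_comm, mul_left_comm, mul_assoc]] at h2
        rw [hg] at h1
        rw [hgg0] at h2
        rcases h1 with h1 | h1
        · rw [h1]; group
        · rcases h2 with h2 | h2
          · rw [h2]; simp [mul_comm, mul_left_comm, mul_assoc]
          · exfalso
            rw [h1, mul_assoc] at h2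
            have e1 : (s * g0)⁻¹ = g0 * s⁻¹ := mul_left_cancel h2
            rw [mul_inv, mul_comm s⁻¹ g0⁻¹] at e1
            have e2 : g0⁻¹ = g0 := mul_right_cancel e1
            apply hg0'
            rw [sq]
            nth_rewrite 1 [← e2]
            exact inv_mul_cancel g0
    intro g
    have hgmem : g ∈ Subgroup.closure S := hSgen ▸ Subgroup.mem_top g
    induction hgmem using Subgroup.closure_induction_right with
    | one => exact ⟨h1, by rwa [one_mul]⟩
    | mul_right x hx y hy ih => exact step x ih y hy
    | mul_inv_cancel x hx y hy ih => exact step x ih y⁻¹ (hSsymm y hy)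
  exact fun g => (key g).1

theorem xi_Ssq_of_abelian {G : Type*} [CommGroup G] (S : Set G)
    (hSsymm : ∀ s ∈ S, s⁻¹ ∈ S) (hSgen : Subgroup.closure S = ⊤)
    (g0 : G) (hg0S : g0 ∈ S) (hg0 : g0 ≠ 1) (hg0' : g0 ^ 2 ≠ 1) :
    (∀ φ : Equiv.Perm G, φ 1 = 1 →
      (∀ g : G, ∀ u ∈ S ∪ S * S, φ (g * u) = φ g * u ∨ φ (g * u) = φ g * u⁻¹) →
      (∀ g : G, φ g = g) ∨ (∀ g : G, φ g = g⁻¹)) ∧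
    (∀ φ : Equiv.Perm G,
      (∀ g : G, ∀ u ∈ S ∪ S * S, φ (g * u) = φ g * u ∨ φ (g * u) = φ g * u⁻¹) →
      ∃ a : G, (∀ g : G, φ g = a * g) ∨ (∀ g : G, φ g = a * g⁻¹)) := by
  have part1 : ∀ φ : Equiv.Perm G, φ 1 = 1 →
      (∀ g : G, ∀ u ∈ S ∪ S * S, φ (g * u) = φ g * u ∨ φ (g * u) = φ g * u⁻¹) →
      (∀ g : G, φ g = g) ∨ (∀ g : G, φ g = g⁻¹) := by
    intro φ h1 hstep
    have hg0val := hstep 1 g0 (Set.mem_union_left _ hg0S)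
    rw [one_mul, h1, one_mul, one_mul] at hg0val
    rcases hg0val with hfix | hinv
    · exact Or.inl (xi_key S hSsymm hSgen g0 hg0S hg0' φ h1 hstep hfix)
    · right
      set ψ : Equiv.Perm G := φ.trans (Equiv.inv G) with hψ
      have hψ1 : ψ 1 = 1 := by simp [hψ, h1]
      have hψstep : ∀ g : G, ∀ u ∈ S ∪ S * S,
          ψ (g * u) = ψ g * u ∨ ψ (g * u) = ψ g * u⁻¹ := by
        intro g u hu
        rcases hstep g u hu with h | h
        · right
          simp only [hψ, Equiv.trans_apply, Equiv.inv_apply]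
          rw [h, mul_inv]
        · left
          simp only [hψ, Equiv.trans_apply, Equiv.inv_apply]
          rw [h, mul_inv, inv_inv]
      have hψfix : ψ g0 = g0 := by simp [hψ, hinv]
      have hid := xi_key S hSsymm hSgen g0 hg0S hg0' ψ hψ1 hψstep hψfix
      intro g
      have hg := hid g
      simp only [hψ, Equiv.trans_apply, Equiv.inv_apply] at hg
      exact inv_eq_iff_eq_inv.mp hg
  refine ⟨part1, ?_⟩
  intro φ hstep
  refine ⟨φ 1, ?_⟩
  set ψ : Equiv.Perm G := φ.trans (Equiv.mulLeft (φ 1)⁻¹) with hψ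
  have hψ1 : ψ 1 = 1 := by simp [hψ]
  have hψstep : ∀ g : G, ∀ u ∈ S ∪ S * S,
      ψ (g * u) = ψ g * u ∨ ψ (g * u) = ψ g * u⁻¹ := by
    intro g u hu
    rcases hstep g u hu with h | h
    · left
      simp only [hψ, Equiv.trans_apply, Equiv.coe_mulLeft]
      rw [h, mul_assoc]
    · right
      simp only [hψ, Equiv.trans_apply, Equiv.coe_mulLeft]
      rw [h, mul_assoc]
  rcases part1 ψ hψ1 hψstep with h | h
  · left
    intro g
    have hg := h g
    simp only [hψ, Equiv.trans_apply, Equiv.coe_mulLeft] at hg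
    exact inv_mul_eq_iff_eq_mul.mp hg
  · right
    intro g
    have hg := h g
    simp only [hψ, Equiv.trans_apply, Equiv.coe_mulLeft] at hg
    exact inv_mul_eq_iff_eq_mul.mp hg
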